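/- arXiv:2009.08000 — 2 statements merged into one kernel-verified Lean document; each statement's English description precedes it below -/
import Mathlib

section
/- Fix d ≥ 1, 1 ≤ k ≤ d, α ∈ (0,1/2), and let 𝒫_{d,k,α} = {P_{d,t,b,α}} where P_{d,t,b,α}(x) = (1 + 2αb·∏_{i∈t} x_i)·2^{−d} for nonempty t ⊆ [d] with |t| ≤ k and b ∈ {±1}. Let U be the uniform distribution on {±1}^d. Then for every function f : {±1}^d → [−1,1], the average over all (t,b) in the family of (E_{x∼P_{d,t,b,α}}[f(x)] − E_{x∼U}[f(x)])² is at most 4α² / C(d,≤k), where C(d,≤k) = ∑_{j=1}^{k} C(d,j). -/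
open Finset

noncomputable def sgn (b : Bool) : ℝ := if b then 1 else -1

noncomputable def Pd (d : ℕ) (t : Finset (Fin d)) (b : Bool) (α : ℝ)
    (x : Fin d → Bool) : ℝ :=
  (1 + 2 * α * sgn b * ∏ i ∈ t, sgn (x i)) / 2 ^ d

lemma sgn_sq (b : Bool) : sgn b * sgn b = 1 := by cases b <;> simp [sgn]

lemma parseval (d : ℕ) (f : (Fin d → Bool) → ℝ) :
    ∑ t : Finset (Fin d), (∑ x, (∏ i ∈ t, sgn (x i)) * f x) ^ 2
      = 2 ^ d * ∑ x, (f x) ^ 2 := by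
  have key : ∀ x y : Fin d → Bool,
      ∏ i, (sgn (x i) * sgn (y i) + 1) = if x = y then (2:ℝ) ^ d else 0 := by
    intro x y
    by_cases h : x = y
    · subst h
      simp [sgn_sq, Finset.prod_const]
      norm_num
    · simp only [h, if_false]
      obtain ⟨i, hi⟩ : ∃ i, x i ≠ y i := by
        by_contra hc
        push_neg at hc
        exact h (funext hc)
      refine Finset.prod_eq_zero (Finset.mem_univ i) ?_
      revert hi
      cases x i <;> cases y i <;> simp [sgn]
  calc ∑ t : Finset (Fin d), (∑ x, (∏ i ∈ t, sgn (x i)) * f x) ^ 2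
      = ∑ t : Finset (Fin d), ∑ x, ∑ y,
          ((∏ i ∈ t, sgn (x i)) * f x) * ((∏ i ∈ t, sgn (y i)) * f y) := by
        refine Finset.sum_congr rfl fun t _ => ?_
        rw [sq, Finset.sum_mul_sum]
    _ = ∑ x, ∑ y, ∑ t : Finset (Fin d),
          ((∏ i ∈ t, sgn (x i)) * f x) * ((∏ i ∈ t, sgn (y i)) * f y) := by
        rw [Finset.sum_comm]
        exact Finset.sum_congr rfl fun x _ => Finset.sum_comm
    _ = ∑ x, ∑ y, (f x * f y) * ∏ i, (sgn (x i) * sgn (y i) + 1) := by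
        refine Finset.sum_congr rfl fun x _ => Finset.sum_congr rfl fun y _ => ?_
        have : ∏ i, (sgn (x i) * sgn (y i) + 1)
            = ∑ t ∈ (Finset.univ : Finset (Fin d)).powerset,
              (∏ i ∈ t, sgn (x i) * sgn (y i)) * ∏ i ∈ Finset.univ \ t, (1:ℝ) := by
          rw [← Finset.prod_add]
        rw [this, Finset.powerset_univ, Finset.mul_sum]
        refine Finset.sum_congr rfl fun t _ => ?_
        rw [Finset.prod_mul_distrib, Finset.prod_const_one]
        ring
    _ = ∑ x, ∑ y, (f x * f y) * (if x = y then (2:ℝ) ^ d else 0) := by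
        simp_rw [key]
    _ = 2 ^ d * ∑ x, (f x) ^ 2 := by
        rw [Finset.mul_sum]
        refine Finset.sum_congr rfl fun x _ => ?_
        simp [mul_ite, mul_zero, Finset.sum_ite_eq]
        ring

lemma card_filter_nat (d k : ℕ) :
    ((Finset.univ.filter
        (fun t : Finset (Fin d) => t.Nonempty ∧ t.card ≤ k)).card)
      = ∑ j ∈ Finset.Icc 1 k, d.choose j := by
  rw [Finset.card_eq_sum_card_fiberwise
    (f := fun t => t.card) (t := Finset.Icc 1 k) ?_]
  · refine Finset.sum_congr rfl fun j hj => ?_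
    rw [Finset.mem_Icc] at hj
    have : (Finset.univ.filter
        (fun t : Finset (Fin d) => t.Nonempty ∧ t.card ≤ k)).filter
          (fun t => t.card = j) = Finset.powersetCard j Finset.univ := by
      ext t
      simp only [Finset.mem_filter, Finset.mem_univ, true_and,
        Finset.mem_powersetCard_univ]
      constructor
      · rintro ⟨_, h⟩; exact h
      · intro h
        refine ⟨⟨?_, ?_⟩, h⟩
        · rw [← Finset.card_pos, h]; omega
        · omega
    rw [this, Finset.card_powersetCard, Finset.card_univ, Fintype.card_fin]
  · intro t ht
    simp only [Finset.mem_coe, Finset.mem_filter] at ht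
    rw [Finset.mem_coe, Finset.mem_Icc]
    exact ⟨Finset.one_le_card.mpr ht.2.1, ht.2.2⟩

/-- The `(∞→2)`-norm bound for the family `𝒫_{d,k,α}`: for every `f : {±1}^d → [-1,1]`,
the average over the family of `(E_{P_{d,t,b,α}} f − E_U f)²` is at most
`4α² / C(d,≤k)` where `C(d,≤k) = ∑_{j=1}^k C(d,j)`. -/
theorem stmt_4 (d k : ℕ) (hd : 1 ≤ d) (hk : 1 ≤ k) (hkd : k ≤ d)
    (α : ℝ) (hα : 0 < α) (hα2 : α < 1 / 2)
    (f : (Fin d → Bool) → ℝ) (hf : ∀ x, |f x| ≤ 1) :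
    (1 / (2 * ((Finset.univ.filter
        (fun t : Finset (Fin d) => t.Nonempty ∧ t.card ≤ k)).card : ℝ))) *
      ∑ t ∈ Finset.univ.filter
          (fun t : Finset (Fin d) => t.Nonempty ∧ t.card ≤ k),
        ∑ b : Bool,
          (∑ x, Pd d t b α x * f x - ∑ x, (1 / 2 ^ d : ℝ) * f x) ^ 2 ≤
      4 * α ^ 2 / (∑ j ∈ Finset.Icc 1 k, (d.choose j : ℝ)) := by
  set S := Finset.univ.filter
      (fun t : Finset (Fin d) => t.Nonempty ∧ t.card ≤ k) with hS
  set W : Finset (Fin d) → ℝ := fun t => ∑ x, (∏ i ∈ t, sgn (x i)) * f x with hW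
  have hNnat : S.card = ∑ j ∈ Finset.Icc 1 k, d.choose j := card_filter_nat d k
  have hNpos : 0 < (S.card : ℝ) := by
    have : 0 < ∑ j ∈ Finset.Icc 1 k, d.choose j := by
      have h1 : 1 ∈ Finset.Icc 1 k := by simp [hk]
      have : 0 < d.choose 1 := by simp [Nat.choose_one_right]; omega
      calc 0 < d.choose 1 := this
        _ ≤ _ := Finset.single_le_sum (fun j _ => Nat.zero_le _) h1
    exact_mod_cast hNnat ▸ this
  have h1 : ∀ t : Finset (Fin d), ∀ b : Bool,
      ∑ x, Pd d t b α x * f x - ∑ x, (1 / 2 ^ d : ℝ) * f x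
        = (2 * α * sgn b / 2 ^ d) * W t := by
    intro t b
    rw [hW, Finset.mul_sum, ← Finset.sum_sub_distrib]
    refine Finset.sum_congr rfl fun x _ => ?_
    simp only [Pd]
    ring
  have h2 : ∀ t : Finset (Fin d),
      ∑ b : Bool, (∑ x, Pd d t b α x * f x - ∑ x, (1 / 2 ^ d : ℝ) * f x) ^ 2
        = 2 * ((2 * α / 2 ^ d) ^ 2 * (W t) ^ 2) := by
    intro t
    rw [Fintype.sum_bool, h1 t true, h1 t false]
    simp only [sgn, if_true, Bool.false_eq_true, if_false]
    ring
  have hsum : ∑ t ∈ S, (W t) ^ 2 ≤ (2:ℝ) ^ d * 2 ^ d := by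
    calc ∑ t ∈ S, (W t) ^ 2 ≤ ∑ t : Finset (Fin d), (W t) ^ 2 :=
          Finset.sum_le_sum_of_subset_of_nonneg (Finset.subset_univ S)
            (fun t _ _ => sq_nonneg _)
      _ = 2 ^ d * ∑ x, (f x) ^ 2 := parseval d f
      _ ≤ 2 ^ d * 2 ^ d := by
          refine mul_le_mul_of_nonneg_left ?_ (by positivity)
          calc ∑ x, (f x) ^ 2 ≤ ∑ x : Fin d → Bool, (1:ℝ) :=
                Finset.sum_le_sum fun x _ => by
                  have := hf x
                  nlinarith [abs_nonneg (f x), sq_abs (f x)]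
            _ = 2 ^ d := by
                simp [Finset.card_univ]
  have hNcast : ((S.card : ℝ)) = ∑ j ∈ Finset.Icc 1 k, (d.choose j : ℝ) := by
    rw [hNnat]; push_cast; ring
  rw [← hNcast]
  have lhs_eq : (1 / (2 * (S.card : ℝ))) *
      ∑ t ∈ S, ∑ b : Bool,
        (∑ x, Pd d t b α x * f x - ∑ x, (1 / 2 ^ d : ℝ) * f x) ^ 2
      = (1 / (S.card : ℝ)) * ((2 * α / 2 ^ d) ^ 2 * ∑ t ∈ S, (W t) ^ 2) := by
    rw [Finset.sum_congr rfl fun t _ => h2 t, ← Finset.mul_sum, ← Finset.mul_sum]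
    field_simp
  rw [lhs_eq]
  have h2d : (0:ℝ) < 2 ^ d := by positivity
  have : (2 * α / 2 ^ d) ^ 2 * ∑ t ∈ S, (W t) ^ 2
      ≤ (2 * α / 2 ^ d) ^ 2 * (2 ^ d * 2 ^ d) := by
    exact mul_le_mul_of_nonneg_left hsum (by positivity)
  calc (1 / (S.card : ℝ)) * ((2 * α / 2 ^ d) ^ 2 * ∑ t ∈ S, (W t) ^ 2)
      ≤ (1 / (S.card : ℝ)) * ((2 * α / 2 ^ d) ^ 2 * (2 ^ d * 2 ^ d)) := by
        exact mul_le_mul_of_nonneg_left this (by positivity)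
    _ = 4 * α ^ 2 / (S.card : ℝ) := by
        field_simp
        ring
end

section
/- Let V be uniform over a finite set 𝒱 and let {P_v}_{v∈𝒱} be a family of distributions on a finite set X. Suppose that for every (2ε,0)-differentially private single-input algorithm M' we have I(M'(P_V); V) ≤ C·ε²·‖{P_v}‖²_{∞→2} for an absolute constant C > 0. Then for every (ε,δ)-differentially private single-input algorithm M, I(M(P_V); V) ≤ C·ε²·‖{P_v}‖²_{∞→2} + O(δ·log|𝒱| + δ·log(1/δ)). -/
open Finset

def IsDist {α : Type*} [Fintype α] (p : α → ℝ) : Prop :=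
  (∀ x, 0 ≤ p x) ∧ ∑ x, p x = 1

def IsDP {X R : Type*} [Fintype X] [Fintype R] (M : X → R → ℝ) (ε δ : ℝ) : Prop :=
  ∀ x x' : X, ∀ C : Finset R, ∑ r ∈ C, M x r ≤ Real.exp ε * ∑ r ∈ C, M x' r + δ

/-- Mutual information (in nats) of a joint distribution on a finite product. -/
noncomputable def mutualInfo {α β : Type*} [Fintype α] [Fintype β]
    (j : α × β → ℝ) : ℝ :=
  ∑ p : α × β,
    if j p = 0 then 0
    else j p * Real.log (j p / ((∑ b, j (p.1, b)) * (∑ a, j (a, p.2))))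

/-- The joint distribution of `(M(P_V), V)` where `V` is uniform on `𝒱`. -/
noncomputable def jointMV {V X R : Type*} [Fintype V] [Fintype X] [Fintype R]
    (P : V → X → ℝ) (M : X → R → ℝ) : R × V → ℝ :=
  fun p => (1 / (Fintype.card V : ℝ)) * ∑ x, P p.2 x * M x p.1

/-- The squared `(∞→2)`-norm of a family of distributions `{P_v}` relative to the
uniform mixture `U = E_v[P_v]`. -/
noncomputable def infTwoNormSq {V X : Type*} [Fintype V] [Fintype X]
    (P : V → X → ℝ) : ℝ :=
  ⨆ f : {f : X → ℝ // ∀ x, |f x| ≤ 1},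
    (1 / (Fintype.card V : ℝ)) *
      ∑ v, (∑ x, P v x * f.1 x -
        ∑ x, ((1 / (Fintype.card V : ℝ)) * ∑ v', P v' x) * f.1 x) ^ 2


open Finset Real

/-- The kernel `x log(y/x)` with junk-value conventions (`log 0 = 0`). -/
noncomputable def kap (x y : ℝ) : ℝ := Real.negMulLog x + x * Real.log y

@[simp] lemma kap_zero (y : ℝ) : kap 0 y = 0 := by simp [kap]

lemma kap_self (x : ℝ) : kap x x = 0 := by simp only [kap, Real.negMulLog]; ring

lemma kap_nonneg {x y : ℝ} (hx : 0 ≤ x) (hxy : x ≤ y) : 0 ≤ kap x y := by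
  rcases eq_or_lt_of_le hx with h | h
  · simp [← h]
  · have hy : 0 < y := lt_of_lt_of_le h hxy
    have : Real.log x ≤ Real.log y := Real.log_le_log (by linarith) hxy
    simp only [kap, Real.negMulLog]
    nlinarith

lemma kap_smul {l x y : ℝ} (hl : 0 ≤ l) (hx : 0 ≤ x) (hxy : x ≤ y) :
    kap (l * x) (l * y) = l * kap x y := by
  rcases eq_or_lt_of_le hl with h | hl
  · simp [← h]
  rcases eq_or_lt_of_le hx with h | hx
  · simp [← h]
  have hy : 0 < y := lt_of_lt_of_le hx hxy
  simp only [kap, Real.negMulLog]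
  rw [Real.log_mul (ne_of_gt hl) (ne_of_gt hx), Real.log_mul (ne_of_gt hl) (ne_of_gt hy)]
  ring

lemma kap_superadd {a b c d : ℝ} (ha : 0 ≤ a) (hac : a ≤ c) (hb : 0 ≤ b) (hbd : b ≤ d) :
    kap a c + kap b d ≤ kap (a + b) (c + d) := by
  rcases eq_or_lt_of_le ha with h | ha
  · subst h
    simp only [kap_zero, zero_add]
    rcases eq_or_lt_of_le hb with h | hb
    · simp [← h]
    · have hd : 0 < d := lt_of_lt_of_le hb hbd
      have : Real.log d ≤ Real.log (c + d) := Real.log_le_log hd (by linarith)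
      simp only [kap]
      nlinarith
  rcases eq_or_lt_of_le hb with h | hb
  · subst h
    simp only [kap_zero, add_zero]
    have hc : 0 < c := lt_of_lt_of_le ha hac
    have : Real.log c ≤ Real.log (c + d) := Real.log_le_log hc (by linarith)
    simp only [kap]
    nlinarith
  · have hc : 0 < c := lt_of_lt_of_le ha hac
    have hd : 0 < d := lt_of_lt_of_le hb hbd
    have hab : 0 < a + b := by linarith
    have hcd : 0 < c + d := by linarith
    -- log (c(a+b)/(a(c+d))) ≤ c(a+b)/(a(c+d)) - 1
    have h1 : Real.log (c * (a+b) / (a * (c+d))) ≤ c * (a+b) / (a * (c+d)) - 1 :=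
      Real.log_le_sub_one_of_pos (by positivity)
    have h2 : Real.log (d * (a+b) / (b * (c+d))) ≤ d * (a+b) / (b * (c+d)) - 1 :=
      Real.log_le_sub_one_of_pos (by positivity)
    have e1 : Real.log (c * (a+b) / (a * (c+d)))
        = Real.log c + Real.log (a+b) - Real.log a - Real.log (c+d) := by
      rw [Real.log_div (by positivity) (by positivity), Real.log_mul (ne_of_gt hc) (ne_of_gt hab),
        Real.log_mul (ne_of_gt ha) (ne_of_gt hcd)]
      ring
    have e2 : Real.log (d * (a+b) / (b * (c+d)))
        = Real.log d + Real.log (a+b) - Real.log b - Real.log (c+d) := by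
      rw [Real.log_div (by positivity) (by positivity), Real.log_mul (ne_of_gt hd) (ne_of_gt hab),
        Real.log_mul (ne_of_gt hb) (ne_of_gt hcd)]
      ring
    rw [e1] at h1
    rw [e2] at h2
    have f1 : a * (Real.log c + Real.log (a+b) - Real.log a - Real.log (c+d))
        ≤ c * (a+b) / (c+d) - a := by
      have := mul_le_mul_of_nonneg_left h1 (le_of_lt ha)
      have hrw : a * (c * (a+b) / (a * (c+d)) - 1) = c * (a+b) / (c+d) - a := by
        field_simp
      linarith [hrw ▸ this]
    have f2 : b * (Real.log d + Real.log (a+b) - Real.log b - Real.log (c+d))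
        ≤ d * (a+b) / (c+d) - b := by
      have := mul_le_mul_of_nonneg_left h2 (le_of_lt hb)
      have hrw : b * (d * (a+b) / (b * (c+d)) - 1) = d * (a+b) / (c+d) - b := by
        field_simp
      linarith [hrw ▸ this]
    have hsum : c * (a+b) / (c+d) + d * (a+b) / (c+d) = a + b := by
      field_simp
    simp only [kap, Real.negMulLog]
    nlinarith [f1, f2]

lemma negMulLog_le_one_sub {x : ℝ} (hx : 0 ≤ x) : Real.negMulLog x ≤ 1 - x := by
  rcases eq_or_lt_of_le hx with h | hx
  · simp [← h]
  · have := Real.one_sub_inv_le_log_of_pos hx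
    simp only [Real.negMulLog]
    have : x * (1 - x⁻¹) ≤ x * Real.log x := mul_le_mul_of_nonneg_left this (le_of_lt hx)
    have hxi : x * x⁻¹ = 1 := mul_inv_cancel₀ (ne_of_gt hx)
    nlinarith

lemma negMulLog_add_le {a b : ℝ} (ha : 0 ≤ a) (hb : 0 ≤ b) :
    Real.negMulLog (a + b) ≤ Real.negMulLog a + Real.negMulLog b := by
  simp only [Real.negMulLog]
  have h1 : a * Real.log a ≤ a * Real.log (a + b) := by
    rcases eq_or_lt_of_le ha with h | ha
    · simp [← h]
    · exact mul_le_mul_of_nonneg_left (Real.log_le_log ha (by linarith)) (le_of_lt ha)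
  have h2 : b * Real.log b ≤ b * Real.log (a + b) := by
    rcases eq_or_lt_of_le hb with h | hb
    · simp [← h]
    · exact mul_le_mul_of_nonneg_left (Real.log_le_log hb (by linarith)) (le_of_lt hb)
  nlinarith

lemma negMulLog_mul' (c x : ℝ) :
    Real.negMulLog (c * x) = c * Real.negMulLog x + x * Real.negMulLog c := by
  rw [Real.negMulLog_mul]; ring

lemma negMulLog_eq_kap_one (x : ℝ) : Real.negMulLog x = kap x 1 := by simp [kap]
section CE

variable {R V : Type} [Fintype R] [Fintype V]

/-- Negative conditional entropy difference: `H(joint) - H(first marginal)`. -/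
noncomputable def CE (j : R × V → ℝ) : ℝ :=
  (∑ p : R × V, Real.negMulLog (j p)) - ∑ r, Real.negMulLog (∑ v, j (r, v))

lemma CE_eq_sum_kap (j : R × V → ℝ) :
    CE j = ∑ r, ∑ v, kap (j (r, v)) (∑ v', j (r, v')) := by
  unfold CE
  rw [Fintype.sum_prod_type, ← Finset.sum_sub_distrib]
  refine Finset.sum_congr rfl fun r _ => ?_
  simp only [kap, Finset.sum_add_distrib, ← Finset.sum_mul, Real.negMulLog]
  ring

lemma CE_nonneg {j : R × V → ℝ} (h : ∀ p, 0 ≤ j p) : 0 ≤ CE j := by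
  rw [CE_eq_sum_kap]
  refine Finset.sum_nonneg fun r _ => Finset.sum_nonneg fun v _ => ?_
  exact kap_nonneg (h _) (Finset.single_le_sum (fun v' _ => h (r, v')) (Finset.mem_univ v))

lemma negMulLog_le_linear {t n : ℝ} (ht : 0 ≤ t) (hn : 0 < n) :
    Real.negMulLog t ≤ t * Real.log n + 1 / n - t := by
  have h := negMulLog_le_one_sub (x := t * n) (by positivity)
  rw [negMulLog_mul'] at h
  -- t * negMulLog n + n * negMulLog t ≤ 1 - t * n
  have hlogn : Real.negMulLog n = -n * Real.log n := rfl
  have : n * Real.negMulLog t ≤ 1 - t * n + t * n * Real.log n := by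
    rw [hlogn] at h; nlinarith
  have h2 : Real.negMulLog t ≤ (1 - t * n + t * n * Real.log n) / n := by
    rw [le_div_iff₀ hn] at *
    linarith [this]
  calc Real.negMulLog t ≤ (1 - t * n + t * n * Real.log n) / n := h2
    _ = t * Real.log n + 1 / n - t := by field_simp; ring

lemma CE_le {j : R × V → ℝ} (h : ∀ p, 0 ≤ j p) :
    CE j ≤ (∑ p, j p) * Real.log (Fintype.card V) := by
  rw [CE_eq_sum_kap, Fintype.sum_prod_type, Finset.sum_mul]
  refine Finset.sum_le_sum fun r _ => ?_
  set s : ℝ := ∑ v', j (r, v') with hs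
  have hs0 : 0 ≤ s := Finset.sum_nonneg fun v _ => h _
  rcases eq_or_lt_of_le hs0 with hz | hspos
  · -- s = 0 forces all entries 0
    have hall : ∀ v ∈ Finset.univ, j (r, v) = 0 := by
      intro v _
      have := Finset.sum_eq_zero_iff_of_nonneg (fun v' (_ : v' ∈ Finset.univ) => h (r, v'))
      exact (this.1 hz.symm) v (Finset.mem_univ v)
    rw [Finset.sum_congr rfl fun v hv => by rw [hall v hv, kap_zero]]
    rw [← hz]
    simp
  · -- s > 0 : normalize
    by_cases hV : Nonempty V
    · have hcard : (0 : ℝ) < Fintype.card V := by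
        exact_mod_cast Fintype.card_pos_iff.mpr hV
      have hterm : ∀ v, kap (j (r, v)) s = s * Real.negMulLog (j (r, v) / s) := by
        intro v
        have hle : j (r, v) ≤ s :=
          Finset.single_le_sum (fun v' _ => h (r, v')) (Finset.mem_univ v)
        have := kap_smul (l := s) (x := j (r, v) / s) (y := 1) (le_of_lt hspos)
          (div_nonneg (h _) hs0) (by rw [div_le_one hspos]; exact hle)
        rw [mul_div_cancel₀ _ (ne_of_gt hspos), mul_one] at this
        rw [this, ← negMulLog_eq_kap_one]
      rw [Finset.sum_congr rfl fun v _ => hterm v, ← Finset.mul_sum]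
      have hsum1 : ∑ v, j (r, v) / s = 1 := by
        rw [← Finset.sum_div, ← hs, div_self (ne_of_gt hspos)]
      have hbound : ∑ v, Real.negMulLog (j (r, v) / s) ≤ Real.log (Fintype.card V) := by
        calc ∑ v, Real.negMulLog (j (r, v) / s)
            ≤ ∑ v, ((j (r, v) / s) * Real.log (Fintype.card V)
                + 1 / (Fintype.card V) - j (r, v) / s) :=
              Finset.sum_le_sum fun v _ => negMulLog_le_linear (div_nonneg (h _) hs0) hcard
          _ = Real.log (Fintype.card V) := by
              rw [Finset.sum_sub_distrib, Finset.sum_add_distrib, ← Finset.sum_mul, hsum1,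
                Finset.sum_const, Finset.card_univ, nsmul_eq_mul]
              have hne : (Fintype.card V : ℝ) ≠ 0 := ne_of_gt hcard
              field_simp
              ring
      exact mul_le_mul_of_nonneg_left hbound (le_of_lt hspos)
    · -- V empty: s = 0 contradiction
      exfalso
      have : s = 0 := by
        rw [hs]
        have : IsEmpty V := not_nonempty_iff.mp hV
        simp
      linarith

end CE
section CE2

variable {R V : Type} [Fintype R] [Fintype V]

lemma CE_concave2 {ω α : R × V → ℝ} (hω : ∀ p, 0 ≤ ω p) (hα : ∀ p, 0 ≤ α p)
    {l u : ℝ} (hl : 0 ≤ l) (hu : 0 ≤ u) :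
    l * CE ω + u * CE α ≤ CE (fun p => l * ω p + u * α p) := by
  rw [CE_eq_sum_kap, CE_eq_sum_kap, CE_eq_sum_kap (fun p => l * ω p + u * α p)]
  rw [Finset.mul_sum, Finset.mul_sum, ← Finset.sum_add_distrib]
  refine Finset.sum_le_sum fun r _ => ?_
  rw [Finset.mul_sum, Finset.mul_sum, ← Finset.sum_add_distrib]
  refine Finset.sum_le_sum fun v _ => ?_
  have hrow : (∑ v', (l * ω (r, v') + u * α (r, v')))
      = l * (∑ v', ω (r, v')) + u * (∑ v', α (r, v')) := by
    rw [Finset.sum_add_distrib, Finset.mul_sum, Finset.mul_sum]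
  have hωle : ω (r, v) ≤ ∑ v', ω (r, v') :=
    Finset.single_le_sum (fun v' _ => hω (r, v')) (Finset.mem_univ v)
  have hαle : α (r, v) ≤ ∑ v', α (r, v') :=
    Finset.single_le_sum (fun v' _ => hα (r, v')) (Finset.mem_univ v)
  calc l * kap (ω (r, v)) (∑ v', ω (r, v')) + u * kap (α (r, v)) (∑ v', α (r, v'))
      = kap (l * ω (r, v)) (l * ∑ v', ω (r, v'))
        + kap (u * α (r, v)) (u * ∑ v', α (r, v')) := by
        rw [kap_smul hl (hω _) hωle, kap_smul hu (hα _) hαle]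
    _ ≤ kap (l * ω (r, v) + u * α (r, v))
          (l * (∑ v', ω (r, v')) + u * (∑ v', α (r, v'))) :=
        kap_superadd (mul_nonneg hl (hω _))
          (mul_le_mul_of_nonneg_left hωle hl) (mul_nonneg hu (hα _))
          (mul_le_mul_of_nonneg_left hαle hu)
    _ = kap (l * ω (r, v) + u * α (r, v)) (∑ v', (l * ω (r, v') + u * α (r, v'))) := by
        rw [hrow]

lemma CE_almost_convex2 {ω α : R × V → ℝ} (hω : IsDist ω) (hα : IsDist α)
    {l u : ℝ} (hl : 0 ≤ l) (hu : 0 ≤ u) (hlu : l + u = 1) :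
    CE (fun p => l * ω p + u * α p)
      ≤ l * CE ω + u * CE α + Real.negMulLog l + Real.negMulLog u := by
  unfold CE
  have hH : (∑ p : R × V, Real.negMulLog (l * ω p + u * α p))
      ≤ l * (∑ p : R × V, Real.negMulLog (ω p)) + u * (∑ p : R × V, Real.negMulLog (α p))
        + Real.negMulLog l + Real.negMulLog u := by
    calc (∑ p : R × V, Real.negMulLog (l * ω p + u * α p))
        ≤ ∑ p : R × V, (Real.negMulLog (l * ω p) + Real.negMulLog (u * α p)) :=
          Finset.sum_le_sum fun p _ =>
            negMulLog_add_le (mul_nonneg hl (hω.1 p)) (mul_nonneg hu (hα.1 p))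
      _ = ∑ p : R × V, (l * Real.negMulLog (ω p) + ω p * Real.negMulLog l
            + (u * Real.negMulLog (α p) + α p * Real.negMulLog u)) := by
          refine Finset.sum_congr rfl fun p _ => ?_
          rw [negMulLog_mul', negMulLog_mul']
      _ = l * (∑ p : R × V, Real.negMulLog (ω p)) + u * (∑ p : R × V, Real.negMulLog (α p))
            + Real.negMulLog l + Real.negMulLog u := by
          rw [Finset.sum_add_distrib, Finset.sum_add_distrib, Finset.sum_add_distrib,
            ← Finset.sum_mul, ← Finset.sum_mul, ← Finset.mul_sum, ← Finset.mul_sum,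
            hω.2, hα.2]
          ring
  have hRow : ∀ r : R, l * Real.negMulLog (∑ v, ω (r, v)) + u * Real.negMulLog (∑ v, α (r, v))
      ≤ Real.negMulLog (∑ v, (l * ω (r, v) + u * α (r, v))) := by
    intro r
    have hrow : (∑ v, (l * ω (r, v) + u * α (r, v)))
        = l * (∑ v, ω (r, v)) + u * (∑ v, α (r, v)) := by
      rw [Finset.sum_add_distrib, Finset.mul_sum, Finset.mul_sum]
    have hω1 : (∑ v, ω (r, v)) ≤ 1 := by
      rw [← hω.2, Fintype.sum_prod_type]
      exact Finset.single_le_sum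
        (f := fun r' => ∑ v, ω (r', v))
        (fun r' _ => Finset.sum_nonneg fun v _ => hω.1 _) (Finset.mem_univ r)
    have hα1 : (∑ v, α (r, v)) ≤ 1 := by
      rw [← hα.2, Fintype.sum_prod_type]
      exact Finset.single_le_sum
        (f := fun r' => ∑ v, α (r', v))
        (fun r' _ => Finset.sum_nonneg fun v _ => hα.1 _) (Finset.mem_univ r)
    have hω0 : 0 ≤ ∑ v, ω (r, v) := Finset.sum_nonneg fun v _ => hω.1 _
    have hα0 : 0 ≤ ∑ v, α (r, v) := Finset.sum_nonneg fun v _ => hα.1 _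
    calc l * Real.negMulLog (∑ v, ω (r, v)) + u * Real.negMulLog (∑ v, α (r, v))
        = kap (l * ∑ v, ω (r, v)) (l * 1) + kap (u * ∑ v, α (r, v)) (u * 1) := by
          rw [kap_smul hl hω0 hω1, kap_smul hu hα0 hα1, ← negMulLog_eq_kap_one,
            ← negMulLog_eq_kap_one]
      _ ≤ kap (l * (∑ v, ω (r, v)) + u * (∑ v, α (r, v))) (l * 1 + u * 1) :=
          kap_superadd (by positivity) (by nlinarith) (by positivity) (by nlinarith)
      _ = Real.negMulLog (∑ v, (l * ω (r, v) + u * α (r, v))) := by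
          rw [hrow]
          rw [mul_one, mul_one, hlu, ← negMulLog_eq_kap_one]
  have hRowSum : l * (∑ r, Real.negMulLog (∑ v, ω (r, v)))
      + u * (∑ r, Real.negMulLog (∑ v, α (r, v)))
      ≤ ∑ r, Real.negMulLog (∑ v, (l * ω (r, v) + u * α (r, v))) := by
    rw [Finset.mul_sum, Finset.mul_sum, ← Finset.sum_add_distrib]
    exact Finset.sum_le_sum fun r _ => hRow r
  linarith

lemma CE_diff_le {j j' : R × V → ℝ} (hj : IsDist j) (hj' : IsDist j') :
    ∃ d : ℝ, 0 ≤ d ∧ d ≤ 1 ∧ d ≤ ∑ p, |j p - j' p| ∧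
      CE j' ≤ CE j + d * Real.log (Fintype.card V)
        + Real.negMulLog d + Real.negMulLog (1 - d) := by
  classical
  set m : R × V → ℝ := fun p => min (j p) (j' p) with hm
  set d : ℝ := 1 - ∑ p, m p with hd
  have hm0 : ∀ p, 0 ≤ m p := fun p => le_min (hj.1 p) (hj'.1 p)
  have hmj : ∀ p, m p ≤ j p := fun p => min_le_left _ _
  have hmj' : ∀ p, m p ≤ j' p := fun p => min_le_right _ _
  have hd1 : d ≤ 1 := by
    have : 0 ≤ ∑ p, m p := Finset.sum_nonneg fun p _ => hm0 p
    rw [hd]; linarith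
  have hd0 : 0 ≤ d := by
    have : ∑ p, m p ≤ ∑ p, j p := Finset.sum_le_sum fun p _ => hmj p
    rw [hd, ← hj.2]; linarith
  have hdabs : d ≤ ∑ p, |j p - j' p| := by
    have h1 : d = ∑ p, (j p - m p) := by
      rw [Finset.sum_sub_distrib, hj.2, hd]
    rw [h1]
    refine Finset.sum_le_sum fun p _ => ?_
    rcases le_total (j p) (j' p) with h | h
    · have hmp : m p = j p := min_eq_left h
      rw [hmp, sub_self]
      exact abs_nonneg _
    · have hmp : m p = j' p := min_eq_right h
      rw [hmp]
      exact le_abs_self _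
  -- nonempty V (IsDist forces it since total is 1)
  have hVne : Nonempty V := by
    by_contra h
    have : IsEmpty (R × V) := by
      have : IsEmpty V := not_nonempty_iff.mp h
      infer_instance
    have := hj.2
    rw [Finset.univ_eq_empty, Finset.sum_empty] at this
    norm_num at this
  have hlogV : 0 ≤ Real.log (Fintype.card V) := by
    apply Real.log_nonneg
    have : 1 ≤ Fintype.card V := Fintype.card_pos_iff.mpr hVne
    exact_mod_cast this
  refine ⟨d, hd0, hd1, hdabs, ?_⟩
  rcases eq_or_lt_of_le hd0 with hdz | hdpos
  · -- d = 0 : j = j'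
    have hjm : ∀ p, j p = m p := by
      have hsum : ∑ p, (j p - m p) = 0 := by
        rw [Finset.sum_sub_distrib, hj.2]; rw [hd] at hdz; linarith
      intro p
      have := (Finset.sum_eq_zero_iff_of_nonneg
        (fun p (_ : p ∈ Finset.univ) => sub_nonneg.mpr (hmj p))).1 hsum p (Finset.mem_univ p)
      linarith
    have hj'm : ∀ p, j' p = m p := by
      have hsum : ∑ p, (j' p - m p) = 0 := by
        rw [Finset.sum_sub_distrib, hj'.2]; rw [hd] at hdz; linarith
      intro p
      have := (Finset.sum_eq_zero_iff_of_nonneg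
        (fun p (_ : p ∈ Finset.univ) => sub_nonneg.mpr (hmj' p))).1 hsum p (Finset.mem_univ p)
      linarith
    have : j' = j := by funext p; rw [hj'm p, hjm p]
    rw [this, ← hdz]
    simp
  rcases eq_or_lt_of_le hd1 with hdone | hdlt1
  · -- d = 1
    have h1 : CE j' ≤ Real.log (Fintype.card V) := by
      have := CE_le hj'.1
      rw [hj'.2, one_mul] at this
      exact this
    have h2 : 0 ≤ CE j := CE_nonneg hj.1
    rw [hdone]
    simp only [one_mul, sub_self, Real.negMulLog_one, Real.negMulLog_zero]
    linarith
  -- 0 < d < 1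
  set ω : R × V → ℝ := fun p => m p / (1 - d) with hω
  set α : R × V → ℝ := fun p => (j p - m p) / d with hα
  set β : R × V → ℝ := fun p => (j' p - m p) / d with hβ
  have h1d : 0 < 1 - d := by linarith
  have hωdist : IsDist ω := by
    constructor
    · intro p; exact div_nonneg (hm0 p) (le_of_lt h1d)
    · rw [hω]
      simp only
      rw [← Finset.sum_div]
      have : ∑ p, m p = 1 - d := by rw [hd]; ring
      rw [this, div_self (ne_of_gt h1d)]
  have hαdist : IsDist α := by
    constructor
    · intro p; exact div_nonneg (sub_nonneg.mpr (hmj p)) (le_of_lt hdpos)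
    · rw [hα]
      simp only
      rw [← Finset.sum_div, Finset.sum_sub_distrib, hj.2]
      have : ∑ p, m p = 1 - d := by rw [hd]; ring
      rw [this]
      field_simp
      ring
  have hβdist : IsDist β := by
    constructor
    · intro p; exact div_nonneg (sub_nonneg.mpr (hmj' p)) (le_of_lt hdpos)
    · rw [hβ]
      simp only
      rw [← Finset.sum_div, Finset.sum_sub_distrib, hj'.2]
      have : ∑ p, m p = 1 - d := by rw [hd]; ring
      rw [this]
      field_simp
      ring
  have hjmix : j = fun p => (1 - d) * ω p + d * α p := by
    funext p
    rw [hω, hα]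
    simp only
    field_simp
    ring
  have hj'mix : j' = fun p => (1 - d) * ω p + d * β p := by
    funext p
    rw [hω, hβ]
    simp only
    field_simp
    ring
  have hlow : (1 - d) * CE ω + d * CE α ≤ CE j := by
    rw [hjmix]
    exact CE_concave2 hωdist.1 hαdist.1 (le_of_lt h1d) (le_of_lt hdpos)
  have hhigh : CE j' ≤ (1 - d) * CE ω + d * CE β
      + Real.negMulLog (1 - d) + Real.negMulLog d := by
    rw [hj'mix]
    exact CE_almost_convex2 hωdist hβdist (le_of_lt h1d) (le_of_lt hdpos) (by ring)
  have hβle : CE β ≤ Real.log (Fintype.card V) := by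
    have := CE_le hβdist.1
    rw [hβdist.2, one_mul] at this
    exact this
  have hα0 : 0 ≤ CE α := CE_nonneg hαdist.1
  nlinarith [hhigh, hlow, hβle, hα0, hdpos]

end CE2
section MIeq

variable {R V : Type} [Fintype R] [Fintype V]

lemma sum_one_of_col {j : R × V → ℝ} [Nonempty V]
    (hV : ∀ v, ∑ r, j (r, v) = 1 / (Fintype.card V : ℝ)) : ∑ p, j p = 1 := by
  have hc : (0 : ℝ) < Fintype.card V := by
    exact_mod_cast Fintype.card_pos_iff.mpr ‹Nonempty V›
  rw [Fintype.sum_prod_type_right]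
  rw [Finset.sum_congr rfl fun v _ => hV v, Finset.sum_const, Finset.card_univ, nsmul_eq_mul]
  field_simp

lemma mutualInfo_eq_log_sub_CE {j : R × V → ℝ} [Nonempty V] (h0 : ∀ p, 0 ≤ j p)
    (hV : ∀ v, ∑ r, j (r, v) = 1 / (Fintype.card V : ℝ)) :
    mutualInfo j = Real.log (Fintype.card V) - CE j := by
  have hc : (0 : ℝ) < Fintype.card V := by
    exact_mod_cast Fintype.card_pos_iff.mpr ‹Nonempty V›
  have hsum1 : ∑ p, j p = 1 := sum_one_of_col hV
  have hterm : ∀ p : R × V,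
      (if j p = 0 then 0
        else j p * Real.log (j p / ((∑ b, j (p.1, b)) * (∑ a, j (a, p.2)))))
      = j p * Real.log (j p) - j p * Real.log (∑ b, j (p.1, b))
        + j p * Real.log (Fintype.card V) := by
    intro p
    by_cases hz : j p = 0
    · rw [if_pos hz, hz]; ring
    · rw [if_neg hz]
      have hjp : 0 < j p := lt_of_le_of_ne (h0 p) (Ne.symm hz)
      have hrow : 0 < ∑ b, j (p.1, b) :=
        lt_of_lt_of_le hjp
          (Finset.single_le_sum (fun b _ => h0 (p.1, b)) (Finset.mem_univ p.2))
      have hcol : (∑ a, j (a, p.2)) = 1 / (Fintype.card V : ℝ) := hV p.2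
      rw [hcol, Real.log_div hz (by positivity), Real.log_mul (ne_of_gt hrow) (by positivity),
        Real.log_div one_ne_zero (ne_of_gt hc), Real.log_one]
      ring
  unfold mutualInfo
  rw [Finset.sum_congr rfl fun p _ => hterm p]
  rw [Finset.sum_add_distrib, Finset.sum_sub_distrib, ← Finset.sum_mul, hsum1, one_mul]
  have hmid : ∑ p : R × V, j p * Real.log (∑ b, j (p.1, b))
      = ∑ r, (∑ v, j (r, v)) * Real.log (∑ b, j (r, b)) := by
    rw [Fintype.sum_prod_type]
    refine Finset.sum_congr rfl fun r _ => ?_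
    show (∑ y : V, j (r, y) * Real.log (∑ b, j (r, b))) = _
    rw [← Finset.sum_mul]
  rw [hmid]
  unfold CE
  have h1 : ∑ p : R × V, j p * Real.log (j p) = -∑ p : R × V, Real.negMulLog (j p) := by
    rw [← Finset.sum_neg_distrib]
    exact Finset.sum_congr rfl fun p _ => by simp only [Real.negMulLog]; ring
  have h2 : ∑ r, (∑ v, j (r, v)) * Real.log (∑ b, j (r, b))
      = -∑ r, Real.negMulLog (∑ v, j (r, v)) := by
    rw [← Finset.sum_neg_distrib]
    exact Finset.sum_congr rfl fun r _ => by simp only [Real.negMulLog]; ring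
  rw [h1, h2]
  ring

lemma mutualInfo_eq_zero_of_card_one {j : R × V → ℝ} (hcard : Fintype.card V = 1)
    (hsum1 : ∑ p, j p = 1) : mutualInfo j = 0 := by
  obtain ⟨v₀, hv₀⟩ := Fintype.card_eq_one_iff.mp hcard
  unfold mutualInfo
  refine Finset.sum_eq_zero fun p _ => ?_
  by_cases hz : j p = 0
  · rw [if_pos hz]
  · rw [if_neg hz]
    have hrow : (∑ b, j (p.1, b)) = j p := by
      have : (Finset.univ : Finset V) = {v₀} := by
        apply Finset.eq_singleton_iff_unique_mem.mpr
        exact ⟨Finset.mem_univ _, fun x _ => hv₀ x⟩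
      rw [this, Finset.sum_singleton]
      have : p.2 = v₀ := hv₀ p.2
      rw [← this]
    have hcol : (∑ a, j (a, p.2)) = 1 := by
      rw [← hsum1, Fintype.sum_prod_type_right]
      have : (Finset.univ : Finset V) = {v₀} := by
        apply Finset.eq_singleton_iff_unique_mem.mpr
        exact ⟨Finset.mem_univ _, fun x _ => hv₀ x⟩
      rw [this, Finset.sum_singleton]
      have : p.2 = v₀ := hv₀ p.2
      rw [← this]
    rw [hrow, hcol, mul_one, div_self hz, Real.log_one, mul_zero]

end MIeq

lemma numeric_bound {δ L d : ℝ} (hδ0 : 0 < δ) (hδ1 : δ < 1) (hL : Real.log 2 ≤ L)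
    (hd0 : 0 ≤ d) (hd1 : d ≤ 1) (hdδ : d ≤ 3 * δ) :
    d * L + Real.negMulLog d + Real.negMulLog (1 - d)
      ≤ 20 * (δ * L + δ * Real.log (1 / δ)) := by
  have hlog2 : (0.6931471803 : ℝ) < Real.log 2 := Real.log_two_gt_d9
  have hLpos : (1/2 : ℝ) ≤ L := by linarith
  have hlogδ : 0 < Real.log (1 / δ) := Real.log_pos (by rw [lt_div_iff₀ hδ0]; linarith)
  have hA : d * L ≤ 3 * δ * L := mul_le_mul_of_nonneg_right hdδ (by linarith)
  have hB : Real.negMulLog (1 - d) ≤ d := by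
    have := negMulLog_le_one_sub (x := 1 - d) (by linarith)
    linarith
  have hC : Real.negMulLog d ≤ δ + 3 * δ * Real.log (1 / δ) := by
    rcases eq_or_lt_of_le hd0 with h | hdpos
    · rw [← h, Real.negMulLog_zero]
      positivity
    · have hsplit : Real.negMulLog d = d * Real.log (δ / d) + d * Real.log (1 / δ) := by
        rw [Real.negMulLog, Real.log_div (ne_of_gt hδ0) (ne_of_gt hdpos),
          Real.log_div one_ne_zero (ne_of_gt hδ0), Real.log_one]
        ring
      have h1 : d * Real.log (δ / d) ≤ δ := by
        have hlt := Real.log_le_sub_one_of_pos (x := δ / d) (by positivity)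
        have := mul_le_mul_of_nonneg_left hlt (le_of_lt hdpos)
        have heq : d * (δ / d - 1) = δ - d := by field_simp
        nlinarith
      have h2 : d * Real.log (1 / δ) ≤ 3 * δ * Real.log (1 / δ) :=
        mul_le_mul_of_nonneg_right hdδ (le_of_lt hlogδ)
      linarith [hsplit ▸ (by linarith [h1, h2] :
        d * Real.log (δ / d) + d * Real.log (1 / δ) ≤ δ + 3 * δ * Real.log (1 / δ))]
  -- combine:  d ≤ 3δ ≤ 6δL, δ ≤ 2δL
  have hδL : δ ≤ 2 * (δ * L) := by nlinarith
  have hdL : d ≤ 3 * δ := hdδ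
  nlinarith [mul_pos hδ0 hlogδ, mul_nonneg (le_of_lt hδ0) (le_of_lt hlogδ),
    mul_nonneg (mul_nonneg (by norm_num : (0:ℝ) ≤ 3) (le_of_lt hδ0)) (by linarith : (0:ℝ) ≤ L)]
section ApproxPure

variable {X R : Type} [Fintype X] [Fintype R]

lemma approx_to_pure [Nonempty X] {M : X → R → ℝ}
    (hM : ∀ x, IsDist (M x)) {ε δ : ℝ} (hε : 0 ≤ ε) (hδ : 0 < δ) (hDP : IsDP M ε δ) :
    ∃ M' : X → R → ℝ, (∀ x, IsDist (M' x)) ∧ IsDP M' (2 * ε) 0 ∧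
      ∀ x, ∑ r, |M x r - M' x r| ≤ 3 * δ := by
  classical
  obtain ⟨x₀⟩ := ‹Nonempty X›
  set lo : R → ℝ := fun r => Real.exp (-ε) * M x₀ r with hlo_def
  set hi : R → ℝ := fun r => Real.exp ε * M x₀ r with hhi_def
  set T : X → R → ℝ := fun x r => min (max (M x r) (lo r)) (hi r) with hT_def
  set S : X → ℝ := fun x => ∑ r, T x r with hS_def
  have hM₀ : ∀ r, 0 ≤ M x₀ r := (hM x₀).1
  have hexp1 : 1 ≤ Real.exp ε := Real.one_le_exp hε
  have hexp2 : Real.exp (-ε) ≤ 1 := by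
    rw [← Real.exp_zero]
    exact Real.exp_le_exp.mpr (by linarith)
  have hexp2' : 0 < Real.exp (-ε) := Real.exp_pos _
  have hlohi : ∀ r, lo r ≤ hi r := fun r =>
    mul_le_mul_of_nonneg_right (le_trans hexp2 hexp1) (hM₀ r)
  have hlo0 : ∀ r, 0 ≤ lo r := fun r => mul_nonneg (le_of_lt hexp2') (hM₀ r)
  have hloT : ∀ x r, lo r ≤ T x r := fun x r => le_min (le_max_right _ _) (hlohi r)
  have hThi : ∀ x r, T x r ≤ hi r := fun x r => min_le_right _ _
  have hsum_hi : ∑ r, hi r = Real.exp ε := by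
    rw [hhi_def, ← Finset.mul_sum, (hM x₀).2, mul_one]
  have hsum_lo : ∑ r, lo r = Real.exp (-ε) := by
    rw [hlo_def, ← Finset.mul_sum, (hM x₀).2, mul_one]
  -- the two truncation-loss bounds
  have hup : ∀ x, ∑ r, max (M x r - hi r) 0 ≤ δ := by
    intro x
    have hsplit : ∑ r, max (M x r - hi r) 0
        = ∑ r ∈ Finset.univ.filter (fun r => hi r < M x r), (M x r - hi r) := by
      rw [Finset.sum_filter]
      refine Finset.sum_congr rfl fun r _ => ?_
      by_cases h : hi r < M x r
      · rw [if_pos h, max_eq_left (by linarith)]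
      · rw [if_neg h, max_eq_right (by push_neg at h; linarith)]
    have hDPc := hDP x x₀ (Finset.univ.filter (fun r => hi r < M x r))
    have hhieq : ∑ r ∈ Finset.univ.filter (fun r => hi r < M x r), hi r
        = Real.exp ε * ∑ r ∈ Finset.univ.filter (fun r => hi r < M x r), M x₀ r := by
      rw [Finset.mul_sum]
    rw [hsplit, Finset.sum_sub_distrib, hhieq]
    linarith
  have hdown : ∀ x, ∑ r, max (lo r - M x r) 0 ≤ δ := by
    intro x
    have hsplit : ∑ r, max (lo r - M x r) 0
        = ∑ r ∈ Finset.univ.filter (fun r => M x r < lo r), (lo r - M x r) := by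
      rw [Finset.sum_filter]
      refine Finset.sum_congr rfl fun r _ => ?_
      by_cases h : M x r < lo r
      · rw [if_pos h, max_eq_left (by linarith)]
      · rw [if_neg h, max_eq_right (by push_neg at h; linarith)]
    have hDPc := hDP x₀ x (Finset.univ.filter (fun r => M x r < lo r))
    have hloeq : ∑ r ∈ Finset.univ.filter (fun r => M x r < lo r), lo r
        = Real.exp (-ε) * ∑ r ∈ Finset.univ.filter (fun r => M x r < lo r), M x₀ r := by
      rw [Finset.mul_sum]
    have hmul := mul_le_mul_of_nonneg_left hDPc (le_of_lt hexp2')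
    have hee : Real.exp (-ε) * Real.exp ε = 1 := by
      rw [← Real.exp_add]; norm_num
    rw [hsplit, Finset.sum_sub_distrib, hloeq]
    have hδ' : Real.exp (-ε) * δ ≤ δ := by nlinarith
    have hexpand : Real.exp (-ε) * (Real.exp ε
          * (∑ r ∈ Finset.univ.filter (fun r => M x r < lo r), M x r) + δ)
        = (∑ r ∈ Finset.univ.filter (fun r => M x r < lo r), M x r) + Real.exp (-ε) * δ := by
      rw [mul_add, ← mul_assoc, hee, one_mul]
    rw [hexpand] at hmul
    linarith
  -- one-sided pointwise bounds
  have hside : ∀ x r, (M x r - T x r ≤ max (M x r - hi r) 0)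
      ∧ (T x r - M x r ≤ max (lo r - M x r) 0) := by
    intro x r
    rcases le_total (M x r) (lo r) with h | h
    · have hT : T x r = lo r := by
        show min (max (M x r) (lo r)) (hi r) = lo r
        rw [max_eq_right h, min_eq_left (hlohi r)]
      constructor
      · rw [hT]
        have h2 := le_max_right (M x r - hi r) 0
        have := hlohi r
        linarith
      · rw [hT]
        exact le_max_left _ _
    · rcases le_total (M x r) (hi r) with h2 | h2
      · have hT : T x r = M x r := by
          show min (max (M x r) (lo r)) (hi r) = M x r
          rw [max_eq_left h, min_eq_left h2]
        rw [hT, sub_self]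
        exact ⟨le_max_right _ _, le_max_right _ _⟩
      · have hT : T x r = hi r := by
          show min (max (M x r) (lo r)) (hi r) = hi r
          rw [max_eq_left h, min_eq_right h2]
        constructor
        · rw [hT]
          exact le_max_left _ _
        · rw [hT]
          have h3 := le_max_right (lo r - M x r) 0
          linarith
  have habs : ∀ x r, |M x r - T x r| ≤ max (M x r - hi r) 0 + max (lo r - M x r) 0 := by
    intro x r
    obtain ⟨h1, h2⟩ := hside x r
    have m1 : (0:ℝ) ≤ max (M x r - hi r) 0 := le_max_right _ _
    have m2 : (0:ℝ) ≤ max (lo r - M x r) 0 := le_max_right _ _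
    rw [abs_le]
    constructor <;> linarith
  have hMT : ∀ x, ∑ r, |M x r - T x r| ≤ 2 * δ := by
    intro x
    calc ∑ r, |M x r - T x r|
        ≤ ∑ r, (max (M x r - hi r) 0 + max (lo r - M x r) 0) :=
          Finset.sum_le_sum fun r _ => habs x r
      _ = (∑ r, max (M x r - hi r) 0) + ∑ r, max (lo r - M x r) 0 :=
          Finset.sum_add_distrib
      _ ≤ 2 * δ := by linarith [hup x, hdown x]
  have hS_ge : ∀ x, 1 - S x ≤ δ := by
    intro x
    have : 1 - S x = ∑ r, (M x r - T x r) := by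
      rw [Finset.sum_sub_distrib, (hM x).2, hS_def]
    rw [this]
    calc ∑ r, (M x r - T x r) ≤ ∑ r, max (M x r - hi r) 0 :=
          Finset.sum_le_sum fun r _ => (hside x r).1
      _ ≤ δ := hup x
  have hS_le : ∀ x, S x - 1 ≤ δ := by
    intro x
    have : S x - 1 = ∑ r, (T x r - M x r) := by
      rw [Finset.sum_sub_distrib, (hM x).2, hS_def]
    rw [this]
    calc ∑ r, (T x r - M x r) ≤ ∑ r, max (lo r - M x r) 0 :=
          Finset.sum_le_sum fun r _ => (hside x r).2
      _ ≤ δ := hdown x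
  -- definition of M'
  set M' : X → R → ℝ := fun x r =>
    if S x ≤ 1 then T x r + ((1 - S x) / (Real.exp ε - S x)) * (hi r - T x r)
    else T x r + ((1 - S x) / (Real.exp (-ε) - S x)) * (lo r - T x r) with hM'_def
  have hMain : ∀ x, (∀ r, lo r ≤ M' x r ∧ M' x r ≤ hi r) ∧ (∑ r, M' x r = 1)
      ∧ (∑ r, |T x r - M' x r| ≤ δ) := by
    intro x
    have hSx : (∑ r, T x r) = S x := rfl
    by_cases hSle : S x ≤ 1
    · set c : ℝ := (1 - S x) / (Real.exp ε - S x) with hc_def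
      have hM'x : ∀ r, M' x r = T x r + c * (hi r - T x r) := by
        intro r
        show (if S x ≤ 1 then T x r + ((1 - S x) / (Real.exp ε - S x)) * (hi r - T x r)
          else T x r + ((1 - S x) / (Real.exp (-ε) - S x)) * (lo r - T x r)) = _
        rw [if_pos hSle]
      have hden : 0 ≤ Real.exp ε - S x := by linarith
      have hc0 : 0 ≤ c := div_nonneg (by linarith) hden
      have hc1 : c ≤ 1 := by
        rcases eq_or_lt_of_le hden with h0 | hpos
        · rw [hc_def, ← h0, div_zero]; norm_num
        · rw [hc_def, div_le_one hpos]; linarith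
      have hcnum : c * (Real.exp ε - S x) = 1 - S x := by
        rcases eq_or_lt_of_le hden with h0 | hpos
        · rw [← h0, mul_zero]
          have : S x = Real.exp ε := by linarith
          linarith
        · rw [hc_def]
          exact div_mul_cancel₀ _ (ne_of_gt hpos)
      refine ⟨fun r => ?_, ?_, ?_⟩
      · constructor
        · rw [hM'x r]
          have h1 := hloT x r
          have h2 := mul_nonneg hc0 (sub_nonneg.mpr (hThi x r))
          linarith
        · rw [hM'x r]
          have h2 := mul_nonneg (sub_nonneg.mpr hc1) (sub_nonneg.mpr (hThi x r))
          nlinarith [hThi x r]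
      · rw [Finset.sum_congr rfl fun r _ => hM'x r, Finset.sum_add_distrib,
          ← Finset.mul_sum, Finset.sum_sub_distrib, hsum_hi, hSx, hcnum]
        ring
      · have hterm : ∀ r, |T x r - M' x r| = c * (hi r - T x r) := by
          intro r
          rw [hM'x r]
          have h2 := mul_nonneg hc0 (sub_nonneg.mpr (hThi x r))
          rw [abs_of_nonpos (by linarith)]
          ring
        rw [Finset.sum_congr rfl fun r _ => hterm r, ← Finset.mul_sum,
          Finset.sum_sub_distrib, hsum_hi, hSx, hcnum]
        linarith [hS_ge x]
    · push_neg at hSle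
      set c : ℝ := (1 - S x) / (Real.exp (-ε) - S x) with hc_def
      have hM'x : ∀ r, M' x r = T x r + c * (lo r - T x r) := by
        intro r
        show (if S x ≤ 1 then T x r + ((1 - S x) / (Real.exp ε - S x)) * (hi r - T x r)
          else T x r + ((1 - S x) / (Real.exp (-ε) - S x)) * (lo r - T x r)) = _
        rw [if_neg (by linarith)]
      have hden : Real.exp (-ε) - S x < 0 := by linarith
      have hden' : 0 < S x - Real.exp (-ε) := by linarith
      have hc' : c = (S x - 1) / (S x - Real.exp (-ε)) := by
        rw [hc_def, div_eq_div_iff (ne_of_lt hden) (ne_of_gt hden')]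
        ring
      have hc0 : 0 ≤ c := by
        rw [hc']
        exact div_nonneg (by linarith) (le_of_lt hden')
      have hc1 : c ≤ 1 := by
        rw [hc', div_le_one hden']
        linarith
      have hcnum : c * (Real.exp (-ε) - S x) = 1 - S x := by
        rw [hc_def]
        exact div_mul_cancel₀ _ (ne_of_lt hden)
      refine ⟨fun r => ?_, ?_, ?_⟩
      · constructor
        · rw [hM'x r]
          have h2 := mul_nonneg (sub_nonneg.mpr hc1) (sub_nonneg.mpr (hloT x r))
          nlinarith [hloT x r]
        · rw [hM'x r]
          have h2 := mul_nonneg hc0 (sub_nonneg.mpr (hloT x r))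
          have := hThi x r
          linarith
      · rw [Finset.sum_congr rfl fun r _ => hM'x r, Finset.sum_add_distrib,
          ← Finset.mul_sum, Finset.sum_sub_distrib, hsum_lo, hSx, hcnum]
        ring
      · have hterm : ∀ r, |T x r - M' x r| = c * (T x r - lo r) := by
          intro r
          rw [hM'x r]
          have h2 := mul_nonneg hc0 (sub_nonneg.mpr (hloT x r))
          rw [abs_of_nonneg (by nlinarith [hloT x r])]
          ring
        have hsc : ∑ r, c * (T x r - lo r) = c * (S x - Real.exp (-ε)) := by
          rw [← Finset.mul_sum, Finset.sum_sub_distrib, hsum_lo, hSx]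
        rw [Finset.sum_congr rfl fun r _ => hterm r, hsc]
        have : c * (S x - Real.exp (-ε)) = S x - 1 := by nlinarith [hcnum]
        rw [this]
        linarith [hS_le x]
  refine ⟨M', fun x => ⟨fun r => le_trans (hlo0 r) ((hMain x).1 r).1, (hMain x).2.1⟩, ?_, ?_⟩
  · -- pure (2ε)-DP
    intro x x' C
    have hpt : ∀ r, M' x r ≤ Real.exp (2 * ε) * M' x' r := by
      intro r
      have h1 : M' x r ≤ hi r := ((hMain x).1 r).2
      have h2 : lo r ≤ M' x' r := ((hMain x').1 r).1
      have hee : Real.exp (2 * ε) * Real.exp (-ε) = Real.exp ε := by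
        rw [← Real.exp_add]; ring_nf
      have : Real.exp (2 * ε) * lo r = hi r := by
        rw [hlo_def, hhi_def]
        show Real.exp (2 * ε) * (Real.exp (-ε) * M x₀ r) = Real.exp ε * M x₀ r
        rw [← mul_assoc, hee]
      nlinarith [mul_le_mul_of_nonneg_left h2 (le_of_lt (Real.exp_pos (2 * ε)))]
    calc ∑ r ∈ C, M' x r ≤ ∑ r ∈ C, Real.exp (2 * ε) * M' x' r :=
          Finset.sum_le_sum fun r _ => hpt r
      _ = Real.exp (2 * ε) * ∑ r ∈ C, M' x' r := by rw [Finset.mul_sum]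
      _ ≤ Real.exp (2 * ε) * ∑ r ∈ C, M' x' r + 0 := by linarith
  · -- closeness
    intro x
    calc ∑ r, |M x r - M' x r|
        ≤ ∑ r, (|M x r - T x r| + |T x r - M' x r|) :=
          Finset.sum_le_sum fun r _ => abs_sub_le _ _ _
      _ = (∑ r, |M x r - T x r|) + ∑ r, |T x r - M' x r| := Finset.sum_add_distrib
      _ ≤ 3 * δ := by linarith [hMT x, (hMain x).2.2]

end ApproxPure
section Joint

variable {V X R : Type} [Fintype V] [Fintype X] [Fintype R]

lemma jointMV_nonneg {P : V → X → ℝ} {M : X → R → ℝ}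
    (hP : ∀ v, IsDist (P v)) (hM : ∀ x, IsDist (M x)) :
    ∀ p, 0 ≤ jointMV P M p := by
  intro p
  unfold jointMV
  apply mul_nonneg (by positivity)
  exact Finset.sum_nonneg fun x _ => mul_nonneg ((hP _).1 x) ((hM x).1 _)

lemma jointMV_col {P : V → X → ℝ} {M : X → R → ℝ}
    (hP : ∀ v, IsDist (P v)) (hM : ∀ x, IsDist (M x)) :
    ∀ v, ∑ r, jointMV P M (r, v) = 1 / (Fintype.card V : ℝ) := by
  intro v
  unfold jointMV
  rw [← Finset.mul_sum, Finset.sum_comm]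
  have : ∀ x, ∑ r : R, P v x * M x r = P v x := by
    intro x
    rw [← Finset.mul_sum, (hM x).2, mul_one]
  rw [Finset.sum_congr rfl fun x _ => this x, (hP v).2, mul_one]

lemma jointMV_L1 [Nonempty V] {P : V → X → ℝ} {M M'' : X → R → ℝ}
    (hP : ∀ v, IsDist (P v)) {D : ℝ}
    (h : ∀ x, ∑ r, |M x r - M'' x r| ≤ D) :
    ∑ p, |jointMV P M p - jointMV P M'' p| ≤ D := by
  have hn : (0:ℝ) < Fintype.card V := by
    exact_mod_cast Fintype.card_pos_iff.mpr ‹Nonempty V›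
  have hterm : ∀ p : R × V, |jointMV P M p - jointMV P M'' p|
      ≤ (1 / (Fintype.card V : ℝ)) * ∑ x, P p.2 x * |M x p.1 - M'' x p.1| := by
    intro p
    unfold jointMV
    rw [← mul_sub, abs_mul, abs_of_pos (by positivity : (0:ℝ) < 1 / (Fintype.card V : ℝ)),
      ← Finset.sum_sub_distrib]
    refine mul_le_mul_of_nonneg_left ?_ (by positivity)
    calc |∑ x, (P p.2 x * M x p.1 - P p.2 x * M'' x p.1)|
        ≤ ∑ x, |P p.2 x * M x p.1 - P p.2 x * M'' x p.1| :=
          Finset.abs_sum_le_sum_abs _ _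
      _ = ∑ x, P p.2 x * |M x p.1 - M'' x p.1| := by
          refine Finset.sum_congr rfl fun x _ => ?_
          rw [← mul_sub, abs_mul, abs_of_nonneg ((hP _).1 x)]
  calc ∑ p, |jointMV P M p - jointMV P M'' p|
      ≤ ∑ p : R × V, (1 / (Fintype.card V : ℝ)) * ∑ x, P p.2 x * |M x p.1 - M'' x p.1| :=
        Finset.sum_le_sum fun p _ => hterm p
    _ = (1 / (Fintype.card V : ℝ)) * ∑ v, ∑ x, P v x * (∑ r, |M x r - M'' x r|) := by
        rw [← Finset.mul_sum, Fintype.sum_prod_type_right]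
        congr 1
        refine Finset.sum_congr rfl fun v _ => ?_
        rw [Finset.sum_comm]
        refine Finset.sum_congr rfl fun x _ => ?_
        rw [Finset.mul_sum]
    _ ≤ (1 / (Fintype.card V : ℝ)) * ∑ v : V, ∑ x, P v x * D := by
        refine mul_le_mul_of_nonneg_left ?_ (by positivity)
        refine Finset.sum_le_sum fun v _ => Finset.sum_le_sum fun x _ => ?_
        exact mul_le_mul_of_nonneg_left (h x) ((hP v).1 x)
    _ = D := by
        have : ∀ v : V, ∑ x, P v x * D = D := by
          intro v
          rw [← Finset.sum_mul, (hP v).2, one_mul]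
        rw [Finset.sum_congr rfl fun v _ => this v, Finset.sum_const, Finset.card_univ,
          nsmul_eq_mul]
        field_simp

end Joint

/-- Transfer of the pure-DP mutual-information bound to approximate DP: there is an
absolute constant `C'` such that if every `(2ε,0)`-DP algorithm `M'` satisfies
`I(M'(P_V); V) ≤ C·ε²·‖{P_v}‖²_{∞→2}`, then every `(ε,δ)`-DP algorithm `M` satisfies
`I(M(P_V); V) ≤ C·ε²·‖{P_v}‖²_{∞→2} + C'·(δ·log|𝒱| + δ·log(1/δ))`. -/
theorem stmt_9 :
    ∃ C' : ℝ, 0 < C' ∧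
      ∀ (V X R : Type) [Fintype V] [Fintype X] [Fintype R] [Nonempty V]
        (P : V → X → ℝ), (∀ v, IsDist (P v)) →
      ∀ C ε δ : ℝ, 0 < C → 0 ≤ ε → 0 < δ → δ < 1 →
      (∀ M' : X → R → ℝ, (∀ x, IsDist (M' x)) → IsDP M' (2 * ε) 0 →
          mutualInfo (jointMV P M') ≤ C * ε ^ 2 * infTwoNormSq P) →
      ∀ M : X → R → ℝ, (∀ x, IsDist (M x)) → IsDP M ε δ →
        mutualInfo (jointMV P M) ≤ C * ε ^ 2 * infTwoNormSq P +
          C' * (δ * Real.log (Fintype.card V) + δ * Real.log (1 / δ)) := by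
  refine ⟨20, by norm_num, ?_⟩
  intro V X R _ _ _ _ P hP C ε δ hC hε hδ0 hδ1 hpure M hMdist hDP
  have hNorm0 : 0 ≤ infTwoNormSq P := by
    apply Real.iSup_nonneg
    intro f
    positivity
  have hRHS0 : 0 ≤ C * ε ^ 2 * infTwoNormSq P :=
    mul_nonneg (by positivity) hNorm0
  have hcard1 : (1:ℝ) ≤ (Fintype.card V : ℝ) := by
    have := Fintype.card_pos (α := V)
    exact_mod_cast this
  have hlogV0 : 0 ≤ Real.log (Fintype.card V) := Real.log_nonneg hcard1
  have hlogδ : 0 < Real.log (1 / δ) := Real.log_pos (by rw [lt_div_iff₀ hδ0]; linarith)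
  have hslack : 0 < 20 * (δ * Real.log (Fintype.card V) + δ * Real.log (1 / δ)) := by
    have h1 : 0 ≤ δ * Real.log (Fintype.card V) := mul_nonneg (le_of_lt hδ0) hlogV0
    have h2 : 0 < δ * Real.log (1 / δ) := mul_pos hδ0 hlogδ
    linarith
  by_cases hX : Nonempty X
  swap
  · -- X empty : the joint is identically 0 and the mutual information vanishes
    have hXe : IsEmpty X := not_nonempty_iff.mp hX
    have hz : ∀ p : R × V, jointMV P M p = 0 := by
      intro p
      unfold jointMV
      rw [Finset.univ_eq_empty, Finset.sum_empty, mul_zero]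
    have hMI : mutualInfo (jointMV P M) = 0 := by
      unfold mutualInfo
      exact Finset.sum_eq_zero fun p _ => by rw [if_pos (hz p)]
    rw [hMI]
    linarith
  by_cases hR : Nonempty R
  swap
  · -- R empty : contradicts `IsDist (M x)`
    exfalso
    have hRe : IsEmpty R := not_nonempty_iff.mp hR
    obtain ⟨x⟩ := hX
    have := (hMdist x).2
    rw [Finset.univ_eq_empty, Finset.sum_empty] at this
    norm_num at this
  by_cases hV1 : Fintype.card V = 1
  · -- |V| = 1 : mutual information is 0
    have hsum1 : ∑ p, jointMV P M p = 1 :=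
      sum_one_of_col (jointMV_col hP hMdist)
    rw [mutualInfo_eq_zero_of_card_one hV1 hsum1]
    linarith
  · -- main case : |V| ≥ 2
    have hV2 : 2 ≤ Fintype.card V := by
      have := Fintype.card_pos (α := V)
      omega
    have hlog2 : Real.log 2 ≤ Real.log (Fintype.card V) :=
      Real.log_le_log (by norm_num) (by exact_mod_cast hV2)
    obtain ⟨M', hM'dist, hM'DP, hM'close⟩ := approx_to_pure hMdist hε hδ0 hDP
    have hMI' := hpure M' hM'dist hM'DP
    have hjdist : IsDist (jointMV P M) :=
      ⟨jointMV_nonneg hP hMdist, sum_one_of_col (jointMV_col hP hMdist)⟩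
    have hj'dist : IsDist (jointMV P M') :=
      ⟨jointMV_nonneg hP hM'dist, sum_one_of_col (jointMV_col hP hM'dist)⟩
    have hMIeq : mutualInfo (jointMV P M)
        = Real.log (Fintype.card V) - CE (jointMV P M) :=
      mutualInfo_eq_log_sub_CE (jointMV_nonneg hP hMdist) (jointMV_col hP hMdist)
    have hMIeq' : mutualInfo (jointMV P M')
        = Real.log (Fintype.card V) - CE (jointMV P M') :=
      mutualInfo_eq_log_sub_CE (jointMV_nonneg hP hM'dist) (jointMV_col hP hM'dist)
    have hL1 : ∑ p, |jointMV P M p - jointMV P M' p| ≤ 3 * δ :=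
      jointMV_L1 hP hM'close
    obtain ⟨d, hd0, hd1, hdle, hCE⟩ := CE_diff_le hjdist hj'dist
    have hd3δ : d ≤ 3 * δ := le_trans hdle hL1
    have hnum := numeric_bound hδ0 hδ1 hlog2 hd0 hd1 hd3δ
    rw [hMIeq]
    rw [hMIeq'] at hMI'
    linarith
end
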